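/- (Projection Lemma, Kempe-Kitaev-Regev) Let H = H₁ + H₂ be a sum of two Hermitian operators on a finite-dimensional complex Hilbert space ℋ, and let S ⊆ ℋ be a nonzero subspace such that H₁ψ = 0 for every ψ ∈ S and ⟨ψ, H₁ψ⟩ ≥ J‖ψ‖² for every ψ in the orthogonal complement S^⊥, where J > 2‖H₂‖ (‖·‖ denoting the operator/spectral norm). Then λ(H₂|_S) − ‖H₂‖²/(J − 2‖H₂‖) ≤ λ(H) ≤ λ(H₂|_S), where λ(·) denotes the smallest eigenvalue and λ(H₂|_S) := min{⟨ψ, H₂ψ⟩ : ψ ∈ S, ‖ψ‖ = 1}. -/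

import Mathlib

variable {E : Type*} [NormedAddCommGroup E] [InnerProductSpace ℂ E] [FiniteDimensional ℂ E]

set_option linter.unusedSectionVars false
set_option maxHeartbeats 1000000

lemma aux_re_inner_le (H : E →L[ℂ] E) (x y : E) :
    |(inner (𝕜 := ℂ) x (H y)).re| ≤ ‖H‖ * ‖x‖ * ‖y‖ := by
  have h1 : |(inner (𝕜 := ℂ) x (H y)).re| ≤ ‖(inner (𝕜 := ℂ) x (H y))‖ :=
    Complex.abs_re_le_norm _
  have h2 : ‖(inner (𝕜 := ℂ) x (H y))‖ ≤ ‖x‖ * ‖H y‖ := norm_inner_le_norm _ _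
  have h3 : ‖H y‖ ≤ ‖H‖ * ‖y‖ := H.le_opNorm y
  nlinarith [norm_nonneg x, norm_nonneg (H y), norm_nonneg y, norm_nonneg H]


/-- The smallest eigenvalue of a Hermitian operator `H`, equivalently the infimum of the
Rayleigh quotient `⟨ψ, Hψ⟩` over unit vectors `ψ`. -/
noncomputable def minEigenvalue (H : E →L[ℂ] E) : ℝ :=
  sInf {r : ℝ | ∃ ψ : E, ‖ψ‖ = 1 ∧ (inner (𝕜 := ℂ) ψ (H ψ)).re = r}

/-- The smallest eigenvalue of `H` restricted to the subspace `S`, i.e. the infimum of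
`⟨ψ, Hψ⟩` over unit vectors `ψ ∈ S`. -/
noncomputable def minEigenvalueOn (H : E →L[ℂ] E) (S : Submodule ℂ E) : ℝ :=
  sInf {r : ℝ | ∃ ψ ∈ S, ‖ψ‖ = 1 ∧ (inner (𝕜 := ℂ) ψ (H ψ)).re = r}

/-- **Projection Lemma** (Kempe–Kitaev–Regev). -/
theorem projection_lemma
    (H₁ H₂ : E →L[ℂ] E) (hH₁ : IsSelfAdjoint H₁) (hH₂ : IsSelfAdjoint H₂)
    (S : Submodule ℂ E) (hS : S ≠ ⊥) (J : ℝ)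
    (hker : ∀ ψ ∈ S, H₁ ψ = 0)
    (hbig : ∀ ψ ∈ Sᗮ, J * ‖ψ‖ ^ 2 ≤ (inner (𝕜 := ℂ) ψ (H₁ ψ)).re)
    (hJ : 2 * ‖H₂‖ < J) :
    minEigenvalueOn H₂ S - ‖H₂‖ ^ 2 / (J - 2 * ‖H₂‖) ≤ minEigenvalue (H₁ + H₂) ∧
      minEigenvalue (H₁ + H₂) ≤ minEigenvalueOn H₂ S := by
  classical
  set K := ‖H₂‖ with hK
  have hK0 : 0 ≤ K := norm_nonneg _
  set T : Set ℝ := {r : ℝ | ∃ ψ : E, ‖ψ‖ = 1 ∧ (inner (𝕜 := ℂ) ψ ((H₁ + H₂) ψ)).re = r} with hT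
  set TS : Set ℝ := {r : ℝ | ∃ ψ ∈ S, ‖ψ‖ = 1 ∧ (inner (𝕜 := ℂ) ψ (H₂ ψ)).re = r} with hTS
  -- a unit vector in S
  obtain ⟨u₀, hu₀S, hu₀⟩ := (Submodule.ne_bot_iff S).mp hS
  have hu₀n : ‖u₀‖ ≠ 0 := norm_ne_zero_iff.mpr hu₀
  set u : E := ((‖u₀‖⁻¹ : ℝ) : ℂ) • u₀ with hu
  have huS : u ∈ S := S.smul_mem _ hu₀S
  have hun : ‖u‖ = 1 := by
    rw [hu, norm_smul]
    simp [norm_inv, hu₀n, inv_mul_cancel₀ hu₀n]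
  have hTSne : TS.Nonempty := ⟨_, u, huS, hun, rfl⟩
  have hTne : T.Nonempty := ⟨_, u, hun, rfl⟩
  have hTbdd : BddBelow T := by
    refine ⟨-‖H₁ + H₂‖, ?_⟩
    rintro r ⟨ψ, hψ, rfl⟩
    have := aux_re_inner_le (H₁ + H₂) ψ ψ
    rw [hψ] at this
    have := neg_abs_le ((inner (𝕜 := ℂ) ψ ((H₁ + H₂) ψ)).re)
    nlinarith [abs_nonneg ((inner (𝕜 := ℂ) ψ ((H₁ + H₂) ψ)).re)]
  have hTSbdd : BddBelow TS := by
    refine ⟨-K, ?_⟩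
    rintro r ⟨ψ, hmem, hψ, rfl⟩
    have h := aux_re_inner_le H₂ ψ ψ
    rw [hψ] at h
    have := neg_abs_le ((inner (𝕜 := ℂ) ψ (H₂ ψ)).re)
    nlinarith
  have hsub : TS ⊆ T := by
    rintro r ⟨ψ, hmem, hψ, rfl⟩
    refine ⟨ψ, hψ, ?_⟩
    simp [ContinuousLinearMap.add_apply, hker ψ hmem]
  have hupper : minEigenvalue (H₁ + H₂) ≤ minEigenvalueOn H₂ S :=
    csInf_le_csInf hTbdd hTSne hsub
  refine ⟨?_, hupper⟩
  -- lower bound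
  set lS := minEigenvalueOn H₂ S with hlS
  have hlSK : lS ≤ K := by
    have h1 : lS ≤ (inner (𝕜 := ℂ) u (H₂ u)).re := csInf_le hTSbdd ⟨u, huS, hun, rfl⟩
    have h2 := aux_re_inner_le H₂ u u
    rw [hun] at h2
    have := le_abs_self ((inner (𝕜 := ℂ) u (H₂ u)).re)
    nlinarith
  have hc : (0:ℝ) < J - 2 * K := by linarith
  refine le_csInf hTne ?_
  rintro r ⟨ψ, hψ, rfl⟩
  set ψ₁ : E := (S.orthogonalProjection ψ : E) with hψ₁
  set ψ₂ : E := ψ - ψ₁ with hψ₂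
  have h1mem : ψ₁ ∈ S := (S.orthogonalProjection ψ).2
  have h2mem : ψ₂ ∈ Sᗮ := S.sub_starProjection_mem_orthogonal ψ
  have hsum : ψ = ψ₁ + ψ₂ := by rw [hψ₂]; abel
  set a := ‖ψ₁‖ with ha
  set b := ‖ψ₂‖ with hb
  have ha0 : 0 ≤ a := norm_nonneg _
  have hb0 : 0 ≤ b := norm_nonneg _
  have hortho : (inner (𝕜 := ℂ) ψ₁ ψ₂) = 0 :=
    Submodule.inner_right_of_mem_orthogonal h1mem h2mem
  have hpyth : a ^ 2 + b ^ 2 = 1 := by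
    have := @norm_add_sq ℂ E _ _ _ ψ₁ ψ₂
    rw [← hsum, hψ] at this
    simp only [hortho, map_zero] at this
    simp at this
    linarith [this.symm]
  -- H₁ part
  have hH₁ψ₁ : H₁ ψ₁ = 0 := hker ψ₁ h1mem
  have hsym : ∀ x y : E, (inner (𝕜 := ℂ) (H₁ x) y) = inner (𝕜 := ℂ) x (H₁ y) := by
    intro x y
    exact (ContinuousLinearMap.isSelfAdjoint_iff_isSymmetric.mp hH₁) x y
  have hH1expand : (inner (𝕜 := ℂ) ψ (H₁ ψ)) = inner (𝕜 := ℂ) ψ₂ (H₁ ψ₂) := by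
    rw [hsum]
    rw [map_add, inner_add_left, inner_add_right, inner_add_right]
    rw [hH₁ψ₁, ← hsym ψ₁ ψ₂, hH₁ψ₁]
    simp
  have hH1low : J * b ^ 2 ≤ (inner (𝕜 := ℂ) ψ (H₁ ψ)).re := by
    rw [hH1expand]; exact hbig ψ₂ h2mem
  -- H₂ part
  have hH2expand : (inner (𝕜 := ℂ) ψ (H₂ ψ)).re =
      (inner (𝕜 := ℂ) ψ₁ (H₂ ψ₁)).re + (inner (𝕜 := ℂ) ψ₁ (H₂ ψ₂)).re +
      (inner (𝕜 := ℂ) ψ₂ (H₂ ψ₁)).re + (inner (𝕜 := ℂ) ψ₂ (H₂ ψ₂)).re := by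
    rw [hsum, map_add, inner_add_left, inner_add_right, inner_add_right]
    simp [Complex.add_re]
    ring
  have hcross1 : -(K * a * b) ≤ (inner (𝕜 := ℂ) ψ₁ (H₂ ψ₂)).re := by
    have := aux_re_inner_le H₂ ψ₁ ψ₂
    have := neg_abs_le ((inner (𝕜 := ℂ) ψ₁ (H₂ ψ₂)).re)
    nlinarith [abs_nonneg ((inner (𝕜 := ℂ) ψ₁ (H₂ ψ₂)).re)]
  have hcross2 : -(K * a * b) ≤ (inner (𝕜 := ℂ) ψ₂ (H₂ ψ₁)).re := by
    have h := aux_re_inner_le H₂ ψ₂ ψ₁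
    have := neg_abs_le ((inner (𝕜 := ℂ) ψ₂ (H₂ ψ₁)).re)
    nlinarith [abs_nonneg ((inner (𝕜 := ℂ) ψ₂ (H₂ ψ₁)).re)]
  have hdiag2 : -(K * b ^ 2) ≤ (inner (𝕜 := ℂ) ψ₂ (H₂ ψ₂)).re := by
    have h := aux_re_inner_le H₂ ψ₂ ψ₂
    have := neg_abs_le ((inner (𝕜 := ℂ) ψ₂ (H₂ ψ₂)).re)
    nlinarith [abs_nonneg ((inner (𝕜 := ℂ) ψ₂ (H₂ ψ₂)).re)]
  have hdiag1 : lS * a ^ 2 ≤ (inner (𝕜 := ℂ) ψ₁ (H₂ ψ₁)).re := by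
    rcases eq_or_ne a 0 with h0 | h0
    · have : ψ₁ = 0 := norm_eq_zero.mp h0
      rw [this, h0]
      simp
    · set v : E := ((a⁻¹ : ℝ) : ℂ) • ψ₁ with hv
      have hvS : v ∈ S := S.smul_mem _ h1mem
      have hvn : ‖v‖ = 1 := by
        rw [hv, norm_smul]
        simp [ha, inv_mul_cancel₀ h0]
        exact inv_mul_cancel₀ h0
      have hmem : (inner (𝕜 := ℂ) v (H₂ v)).re ∈ TS := ⟨v, hvS, hvn, rfl⟩
      have hle : lS ≤ (inner (𝕜 := ℂ) v (H₂ v)).re := csInf_le hTSbdd hmem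
      have hval : (inner (𝕜 := ℂ) v (H₂ v)) =
          ((a⁻¹ : ℝ) : ℂ) * ((a⁻¹ : ℝ) : ℂ) * inner (𝕜 := ℂ) ψ₁ (H₂ ψ₁) := by
        rw [hv, map_smul, inner_smul_left, inner_smul_right]
        simp [Complex.conj_ofReal]
        ring
      have hre : (inner (𝕜 := ℂ) v (H₂ v)).re = a⁻¹ * a⁻¹ * (inner (𝕜 := ℂ) ψ₁ (H₂ ψ₁)).re := by
        rw [hval]
        push_cast
        simp [Complex.mul_re]
        try ring
      have ha' : 0 < a := lt_of_le_of_ne ha0 (Ne.symm h0)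
      rw [hre] at hle
      have key : a⁻¹ * a⁻¹ * (inner (𝕜 := ℂ) ψ₁ (H₂ ψ₁)).re * a ^ 2
          = (inner (𝕜 := ℂ) ψ₁ (H₂ ψ₁)).re := by
        rw [pow_two]
        field_simp
      have := mul_le_mul_of_nonneg_right hle (sq_nonneg a)
      rw [key] at this
      exact this
  -- combine
  have hsplit : (inner (𝕜 := ℂ) ψ ((H₁ + H₂) ψ)).re =
      (inner (𝕜 := ℂ) ψ (H₁ ψ)).re + (inner (𝕜 := ℂ) ψ (H₂ ψ)).re := by
    simp [ContinuousLinearMap.add_apply, inner_add_right, Complex.add_re]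
  rw [hsplit, hH2expand]
  have hdivmul : K ^ 2 / (J - 2 * K) * (J - 2 * K) = K ^ 2 :=
    div_mul_cancel₀ _ (ne_of_gt hc)
  have hab : a ≤ 1 := by nlinarith
  have habK : K * a * b ≤ K * b := by nlinarith [mul_nonneg (mul_nonneg hK0 hb0) (sub_nonneg.mpr hab)]
  have hmain : 0 ≤ (J - K - lS) * b ^ 2 - 2 * (K * b) + K ^ 2 / (J - 2 * K) := by
    nlinarith [sq_nonneg ((J - 2 * K) * b - K),
      mul_nonneg (mul_nonneg (sub_nonneg.mpr hlSK) hc.le) (sq_nonneg b), hc]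
  have hls : lS * a ^ 2 = lS - lS * b ^ 2 := by linear_combination lS * hpyth
  linarith [hH1low, hdiag1, hcross1, hcross2, hdiag2]
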